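/- Let f : D_Q → C be given by the realization f(z) = A + B[I - (Q(z) ⊗ I_H)D]^{-1}(Q(z) ⊗ I_H)C, where Q(z) = Σ_j z_j Q_j is an s×r matrix of linear polynomials, D_Q = { z ∈ C^d : ‖Q(z)‖ < 1 }, and V = [[A,B],[C,D]] : C ⊕ (C^s ⊗ H) → C ⊕ (C^r ⊗ H) is unitary. Then for λ ∈ D_Q, f(λ) = 0 if and only if there exists a nonzero vector v ∈ C^r ⊗ H with D* v = (Q(λ) ⊗ I_H) v. -/

import Mathlib

set_option synthInstance.maxHeartbeats 1000000
set_option maxHeartbeats 2000000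
open ContinuousLinearMap

/-- `PiLp` over complete spaces is complete (its uniformity is the product uniformity). -/
instance PiLp.instCompleteSpace' (p : ENNReal) {ι : Type*} (β : ι → Type*)
    [∀ i, UniformSpace (β i)] [∀ i, CompleteSpace (β i)] :
    CompleteSpace (PiLp p β) :=
  (PiLp.uniformEquiv p β).completeSpace_iff.2 inferInstance

/-- Matrix unit ball realization (commutative case): for `λ ∈ 𝔻_Q`,
`f(λ) = 0` iff there is a nonzero `v ∈ ℂ^r ⊗ H` with `D* v = (Q(λ) ⊗ I_H) v`.
Here `ℂ^s ⊗ H` and `ℂ^r ⊗ H` are modeled as `PiLp 2` spaces, `QI z` is the operator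
`Q(z) ⊗ I_H`, and `V = [[A,B],[C,D]] : ℂ ⊕ (ℂ^s ⊗ H) → ℂ ⊕ (ℂ^r ⊗ H)` is unitary. -/
theorem stmt15 {H : Type*} [NormedAddCommGroup H] [InnerProductSpace ℂ H] [CompleteSpace H]
    {d r s : ℕ}
    (Q : Fin d → Matrix (Fin s) (Fin r) ℂ)
    (QI : (Fin d → ℂ) →
      ((PiLp 2 fun _ : Fin r => H) →L[ℂ] (PiLp 2 fun _ : Fin s => H)))
    (hQI : ∀ (z : Fin d → ℂ) (v : PiLp 2 fun _ : Fin r => H) (a : Fin s),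
      QI z v a = ∑ j, ∑ b, (z j * Q j a b) • v b)
    (A : ℂ) (B : (PiLp 2 fun _ : Fin s => H) →L[ℂ] ℂ)
    (C : ℂ →L[ℂ] (PiLp 2 fun _ : Fin r => H))
    (D : (PiLp 2 fun _ : Fin s => H) →L[ℂ] (PiLp 2 fun _ : Fin r => H))
    -- V*V = I on ℂ ⊕ (ℂ^s ⊗ H)
    (h1 : star A * A + adjoint C (C 1) = 1)
    (h2 : ∀ h, star A * B h + adjoint C (D h) = 0)
    (h3 : adjoint B A + adjoint D (C 1) = 0)
    (h4 : ∀ h, adjoint B (B h) + adjoint D (D h) = h)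
    -- V V* = I on ℂ ⊕ (ℂ^r ⊗ H)
    (h5 : A * star A + B (adjoint B 1) = 1)
    (h6 : ∀ v, A * adjoint C v + B (adjoint D v) = 0)
    (h7 : C (star A) + D (adjoint B 1) = 0)
    (h8 : ∀ v, C (adjoint C v) + D (adjoint D v) = v)
    (f : (Fin d → ℂ) → ℂ)
    (hf : ∀ z, f z = A + B (Ring.inverse (1 - (QI z) ∘L D) (QI z (C 1)))) :
    ∀ lam : Fin d → ℂ, ‖QI lam‖ < 1 →
      (f lam = 0 ↔ ∃ v, v ≠ 0 ∧ adjoint D v = QI lam v) := by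
  intro lam hlam
  classical
  -- D is a contraction
  have hD : ‖D‖ ≤ 1 := by
    refine opNorm_le_bound D zero_le_one (fun h => ?_)
    rw [one_mul]
    have key : ((‖B h‖ : ℂ))^2 + ((‖D h‖ : ℂ))^2 = ((‖h‖ : ℂ))^2 := by
      have h4' := congrArg (fun w => (inner ℂ w h : ℂ)) (h4 h)
      simpa [inner_add_left, ContinuousLinearMap.adjoint_inner_left,
        inner_self_eq_norm_sq_to_K, RCLike.conj_mul] using h4'
    have keyR : ‖B h‖^2 + ‖D h‖^2 = ‖h‖^2 := by
      exact_mod_cast key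
    nlinarith [norm_nonneg (B h), norm_nonneg (D h), norm_nonneg h]
  have hflam := hf lam
  set T := QI lam ∘L D with hTdef
  have hT : ‖T‖ < 1 := by
    calc ‖T‖ ≤ ‖QI lam‖ * ‖D‖ := opNorm_comp_le _ _
      _ ≤ ‖QI lam‖ * 1 := by
          exact mul_le_mul_of_nonneg_left hD (norm_nonneg (QI lam))
      _ = ‖QI lam‖ := mul_one _
      _ < 1 := hlam
  have hUnit : IsUnit ((1 : (PiLp 2 fun _ : Fin s => H) →L[ℂ] (PiLp 2 fun _ : Fin s => H)) - T) :=
    ⟨Units.oneSub T hT, rfl⟩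
  set invT := Ring.inverse (1 - T) with hinvTdef
  have hinv1 : invT * (1 - T) = 1 := Ring.inverse_mul_cancel _ hUnit
  have hinv2 : (1 - T) * invT = 1 := Ring.mul_inverse_cancel _ hUnit
  set u := invT (QI lam (C 1)) with hudef
  have hu : u - QI lam (D u) = QI lam (C 1) := by
    have h' := congrArg (fun g => g (QI lam (C 1))) hinv2
    simpa [mul_apply, sub_apply, one_apply, comp_apply, hTdef] using h'
  have hQv : QI lam (C 1 + D u) = u := by
    rw [map_add, ← hu]; abel
  constructor
  · intro h0
    have hAB : A + B u = 0 := by rw [← hflam]; exact h0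
    refine ⟨C 1 + D u, ?_, ?_⟩
    · intro hv0
      have hu0 : u = 0 := by rw [← hQv, hv0, map_zero]
      have hA0 : A = 0 := by simpa [hu0] using hAB
      have hC0 : C 1 = 0 := by
        have := hv0; rw [hu0, map_zero, add_zero] at this; exact this
      rw [hA0, hC0, map_zero] at h1
      simp at h1
    · have hB0 : ContinuousLinearMap.adjoint B A + ContinuousLinearMap.adjoint B (B u) = 0 := by
        rw [← map_add, hAB, map_zero]
      have key : ContinuousLinearMap.adjoint D (C 1) + ContinuousLinearMap.adjoint D (D u) = u := by
        calc ContinuousLinearMap.adjoint D (C 1) + ContinuousLinearMap.adjoint D (D u)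
            = ((ContinuousLinearMap.adjoint B A + ContinuousLinearMap.adjoint D (C 1))
              + (ContinuousLinearMap.adjoint B (B u) + ContinuousLinearMap.adjoint D (D u)))
              - (ContinuousLinearMap.adjoint B A + ContinuousLinearMap.adjoint B (B u)) := by abel
          _ = (0 + u) - 0 := by rw [h3, h4, hB0]
          _ = u := by abel
      rw [map_add, key, hQv]
  · rintro ⟨v, hv0, hv⟩
    set α := ContinuousLinearMap.adjoint C v with hαdef
    have hv' : C α + D (QI lam v) = v := by rw [← hv]; exact h8 v
    have hCα : C α = α • C 1 := by
      rw [← map_smul]; congr 1; simp [smul_eq_mul]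
    have step : QI lam v - T (QI lam v) = α • QI lam (C 1) := by
      nth_rewrite 1 [← hv']
      rw [map_add, hCα, map_smul, hTdef, comp_apply]
      abel
    have hQvα : QI lam v = α • u := by
      have h1' := congrArg (fun g => g (QI lam v)) hinv1
      calc QI lam v = invT ((1 - T) (QI lam v)) := by
            simpa [mul_apply] using h1'.symm
        _ = invT (α • QI lam (C 1)) := by
            rw [sub_apply, ContinuousLinearMap.one_apply, step]
        _ = α • u := by rw [map_smul, hudef]
    have hα : α ≠ 0 := by
      intro hα0
      have hQ0 : QI lam v = 0 := by rw [hQvα, hα0, zero_smul]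
      have : v = 0 := by
        rw [← hv', hα0, hQ0, map_zero, map_zero, add_zero]
      exact hv0 this
    have h6' := h6 v
    rw [← hαdef, hv, hQvα, map_smul, smul_eq_mul] at h6'
    rw [hflam]
    have hfinal : α * (A + B u) = 0 := by ring_nf; ring_nf at h6'; linear_combination h6'
    rcases mul_eq_zero.mp hfinal with h | h
    · exact absurd h hα
    · exact h
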